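/- Let Γ = ⟨a, b | a² = b³ = (ab)^{p} = 1⟩ be the (2,3,p) triangle group with p ≥ 7. Then the commutator aba⁻¹b⁻¹ has infinite order in Γ. -/

import Mathlib

/-- The relations of the (2,3,p) triangle group `⟨a, b | a² = b³ = (ab)ᵖ = 1⟩`,
with `a` and `b` the two free generators. -/
def triangleRels23 (p : ℕ) : Set (FreeGroup (Fin 2)) :=
  {FreeGroup.of 0 ^ 2, FreeGroup.of 1 ^ 3, (FreeGroup.of 0 * FreeGroup.of 1) ^ p}

noncomputable section AuxTriangle

open Matrix Real

/-- Cayley–Hamilton for 2×2 real matrices. -/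
lemma aux_ch2 (X : Matrix (Fin 2) (Fin 2) ℝ) : X * X = X.trace • X - X.det • 1 := by
  ext i j
  fin_cases i <;> fin_cases j <;>
    simp [Matrix.mul_apply, Fin.sum_univ_two, Matrix.trace_fin_two, Matrix.det_fin_two,
      Matrix.one_apply] <;> ring

lemma aux_trace_one : (1 : Matrix (Fin 2) (Fin 2) ℝ).trace = 2 := by
  simp [Matrix.trace_fin_two]

/-- trace recurrence for powers of a determinant-one matrix. -/
lemma aux_trace_rec (X : Matrix (Fin 2) (Fin 2) ℝ) (hdet : X.det = 1) (n : ℕ) :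
    (X ^ (n + 2)).trace = X.trace * (X ^ (n + 1)).trace - (X ^ n).trace := by
  have h : X ^ (n + 2) = X.trace • X ^ (n + 1) - X ^ n := by
    have hch := aux_ch2 X
    rw [hdet, one_smul] at hch
    calc X ^ (n + 2) = X ^ n * (X * X) := by rw [pow_add, pow_two]
    _ = X ^ n * (X.trace • X - 1) := by rw [hch]
    _ = X.trace • X ^ (n + 1) - X ^ n := by
        rw [mul_sub, mul_one, mul_smul_comm, pow_succ]
  rw [h, Matrix.trace_sub, Matrix.trace_smul, smul_eq_mul]

/-- trace of powers grows when the trace exceeds 2. -/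
lemma aux_trace_grow (X : Matrix (Fin 2) (Fin 2) ℝ) (hdet : X.det = 1)
    (ht : 2 < X.trace) :
    ∀ n : ℕ, 2 ≤ (X ^ n).trace ∧ (X ^ n).trace + (X.trace - 2) ≤ (X ^ (n + 1)).trace := by
  intro n
  induction n with
  | zero => simp [aux_trace_one]
  | succ n ih =>
      obtain ⟨h1, h2⟩ := ih
      have h3 : 2 ≤ (X ^ (n + 1)).trace := by linarith
      refine ⟨h3, ?_⟩
      have hrec := aux_trace_rec X hdet n
      nlinarith [h1, h2, hrec, ht]

lemma aux_trace_pow_gt (X : Matrix (Fin 2) (Fin 2) ℝ) (hdet : X.det = 1)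
    (ht : 2 < X.trace) (n : ℕ) (hn : 1 ≤ n) : 2 < (X ^ n).trace := by
  obtain ⟨m, rfl⟩ : ∃ m, n = m + 1 := ⟨n - 1, by omega⟩
  obtain ⟨h1, h2⟩ := aux_trace_grow X hdet ht m
  linarith

/-- Chebyshev-type formula for powers of a det-1 matrix with trace `2 cos θ`. -/
lemma aux_cheb (M : Matrix (Fin 2) (Fin 2) ℝ) (θ : ℝ) (hdet : M.det = 1)
    (htr : M.trace = 2 * Real.cos θ) (n : ℕ) :
    Real.sin θ • M ^ (n + 1)
      = Real.sin ((n + 1 : ℕ) * θ) • M - Real.sin ((n : ℕ) * θ) • 1 := by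
  induction n with
  | zero => simp
  | succ n ih =>
      have hch : M * M = (2 * Real.cos θ) • M - 1 := by
        have := aux_ch2 M
        rw [hdet, one_smul, htr] at this
        exact this
      have hstep : Real.sin θ • M ^ (n + 2) = (Real.sin θ • M ^ (n + 1)) * M := by
        rw [smul_mul_assoc, ← pow_succ]
      have e1 : Real.sin ((n + 2 : ℕ) * θ)
          = 2 * Real.cos θ * Real.sin ((n + 1 : ℕ) * θ) - Real.sin ((n : ℕ) * θ) := by
        have a1 : ((n + 2 : ℕ) : ℝ) * θ = ((n + 1 : ℕ) : ℝ) * θ + θ := by push_cast; ring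
        have a2 : ((n : ℕ) : ℝ) * θ = ((n + 1 : ℕ) : ℝ) * θ - θ := by push_cast; ring
        rw [a1, a2, Real.sin_add, Real.sin_sub]; ring
      rw [hstep, ih, sub_mul, smul_mul_assoc, smul_mul_assoc, one_mul, hch, e1]
      module

/-- a det-1 matrix with trace `2 cos (π/p)` satisfies `M ^ p = -1`. -/
lemma aux_pow_eq_neg_one (M : Matrix (Fin 2) (Fin 2) ℝ) (p : ℕ) (hp : 2 ≤ p)
    (hdet : M.det = 1) (htr : M.trace = 2 * Real.cos (Real.pi / p)) :
    M ^ p = -1 := by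
  set θ : ℝ := Real.pi / p with hθ
  have hppos : (0 : ℝ) < p := by positivity
  have hθpos : 0 < θ := div_pos Real.pi_pos hppos
  have hθlt : θ < Real.pi := by
    rw [hθ]
    exact div_lt_self Real.pi_pos (by exact_mod_cast by omega)
  have hs : Real.sin θ ≠ 0 := ne_of_gt (Real.sin_pos_of_pos_of_lt_pi hθpos hθlt)
  obtain ⟨q, rfl⟩ : ∃ q, p = q + 1 := ⟨p - 1, by omega⟩
  have hc := aux_cheb M θ hdet htr q
  have hq1 : ((q + 1 : ℕ) : ℝ) * θ = Real.pi := by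
    rw [hθ]
    field_simp
  have hq2 : ((q : ℕ) : ℝ) * θ = Real.pi - θ := by
    have : ((q : ℕ) : ℝ) = ((q + 1 : ℕ) : ℝ) - 1 := by push_cast; ring
    rw [this, sub_mul, one_mul, hq1]
  rw [hq1, hq2, Real.sin_pi, Real.sin_pi_sub, zero_smul, zero_sub] at hc
  have : Real.sin θ • M ^ (q + 1) = Real.sin θ • (-1 : Matrix (Fin 2) (Fin 2) ℝ) := by
    rw [hc, smul_neg]
  exact smul_right_injective (Matrix (Fin 2) (Fin 2) ℝ) hs this

end AuxTriangle

/-- In the (2,3,p) triangle group `Γ = ⟨a, b | a² = b³ = (ab)ᵖ = 1⟩` with `p ≥ 7`,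
the commutator `a b a⁻¹ b⁻¹` has infinite order. -/
theorem stmt15 (p : ℕ) (hp : 7 ≤ p) :
    let a : PresentedGroup (triangleRels23 p) := PresentedGroup.of 0
    let b : PresentedGroup (triangleRels23 p) := PresentedGroup.of 1
    ¬ IsOfFinOrder (a * b * a⁻¹ * b⁻¹) := by
  intro a b hfin
  -- setup real constants
  set z : ℝ := 2 * Real.cos (Real.pi / p) with hzdef
  have hz3 : 3 < z ^ 2 := by
    have h1 : Real.pi / p < Real.pi / 6 := by
      apply div_lt_div_of_pos_left Real.pi_pos (by norm_num)
      exact_mod_cast by omega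
    have h2 : Real.cos (Real.pi / 6) < Real.cos (Real.pi / p) := by
      apply Real.cos_lt_cos_of_nonneg_of_le_pi
      · positivity
      · linarith [Real.pi_pos]
      · exact h1
    rw [Real.cos_pi_div_six] at h2
    have h3 : Real.sqrt 3 < z := by
      rw [hzdef]
      nlinarith [Real.sq_sqrt (by norm_num : (3:ℝ) ≥ 0), Real.sqrt_nonneg 3]
    nlinarith [Real.sq_sqrt (by norm_num : (3:ℝ) ≥ 0), Real.sqrt_nonneg 3]
  set t : ℝ := Real.sqrt (z ^ 2 - 3) with htdef
  have ht2 : t ^ 2 = z ^ 2 - 3 := Real.sq_sqrt (by linarith)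
  -- matrices
  set Amat : Matrix (Fin 2) (Fin 2) ℝ := !![0, 1; -1, 0] with hA
  set Bmat : Matrix (Fin 2) (Fin 2) ℝ := !![1/2, (t - z)/2; (t + z)/2, 1/2] with hB
  have hdetA : Amat.det = 1 := by simp [hA, Matrix.det_fin_two_of]
  have hdetB : Bmat.det = 1 := by
    rw [hB, Matrix.det_fin_two_of]
    linear_combination (-(1:ℝ)/4) * ht2
  -- SL2 elements
  set AS : Matrix.SpecialLinearGroup (Fin 2) ℝ := ⟨Amat, hdetA⟩ with hAS
  set BS : Matrix.SpecialLinearGroup (Fin 2) ℝ := ⟨Bmat, hdetB⟩ with hBS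
  have hdetNeg : (-1 : Matrix (Fin 2) (Fin 2) ℝ).det = 1 := by
    rw [Matrix.det_neg]; simp
  set w : Matrix.SpecialLinearGroup (Fin 2) ℝ := ⟨-1, hdetNeg⟩ with hw
  -- w is central
  have hcomm : ∀ g : Matrix.SpecialLinearGroup (Fin 2) ℝ, Commute g w := by
    intro g
    apply Subtype.ext
    show (g : Matrix (Fin 2) (Fin 2) ℝ) * (-1) = (-1) * g
    simp
  set H := Subgroup.zpowers w with hH
  haveI hN : H.Normal := by
    constructor
    intro x hx g
    obtain ⟨k, rfl⟩ := hx
    have : g * w ^ k = w ^ k * g := ((hcomm g).zpow_right k).eq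
    have : g * w ^ k * g⁻¹ = w ^ k := by rw [this, mul_assoc, mul_inv_cancel, mul_one]
    rw [this]
    exact Subgroup.zpow_mem_zpowers w k
  set G := Matrix.SpecialLinearGroup (Fin 2) ℝ ⧸ H with hG
  set mk : Matrix.SpecialLinearGroup (Fin 2) ℝ →* G := QuotientGroup.mk' H with hmk
  have hwmem : mk w = 1 := by
    rw [hmk, QuotientGroup.mk'_apply, QuotientGroup.eq_one_iff]
    exact Subgroup.mem_zpowers w
  -- key matrix identities
  have hA2 : AS ^ 2 = w := by
    apply Subtype.ext
    show (Amat ^ 2 : Matrix (Fin 2) (Fin 2) ℝ) = -1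
    rw [pow_two, hA]
    ext i j
    fin_cases i <;> fin_cases j <;>
      simp [Matrix.mul_apply, Fin.sum_univ_two, Matrix.one_apply]
  have htrB : Bmat.trace = 1 := by rw [hB]; simp [Matrix.trace_fin_two]; ring
  have hB3 : BS ^ 3 = w := by
    apply Subtype.ext
    show (Bmat ^ 3 : Matrix (Fin 2) (Fin 2) ℝ) = -1
    have hch := aux_ch2 Bmat
    rw [hdetB, htrB, one_smul, one_smul] at hch
    have h3 : Bmat ^ 3 = Bmat * Bmat * Bmat := by rw [pow_succ, pow_two]
    rw [h3, hch, sub_mul, one_mul, hch]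
    abel
  have htrAB : (Amat * Bmat).trace = z := by
    rw [hA, hB]
    simp [Matrix.trace_fin_two, Matrix.mul_apply, Fin.sum_univ_two]
    ring
  have hdetAB : (Amat * Bmat).det = 1 := by rw [Matrix.det_mul, hdetA, hdetB, mul_one]
  have hABp : (AS * BS) ^ p = w := by
    apply Subtype.ext
    show ((Amat * Bmat : Matrix (Fin 2) (Fin 2) ℝ)) ^ p = -1
    exact aux_pow_eq_neg_one (Amat * Bmat) p (by omega) hdetAB (by rw [htrAB, hzdef])
  -- the homomorphism
  set f : Fin 2 → G := ![mk AS, mk BS] with hf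
  have hrel : ∀ r ∈ triangleRels23 p, FreeGroup.lift f r = 1 := by
    intro r hr
    rcases hr with rfl | rfl | rfl
    · rw [map_pow, FreeGroup.lift_apply_of]
      show (mk AS) ^ 2 = 1
      rw [← map_pow, hA2, hwmem]
    · rw [map_pow, FreeGroup.lift_apply_of]
      show (mk BS) ^ 3 = 1
      rw [← map_pow, hB3, hwmem]
    · rw [map_pow, map_mul, FreeGroup.lift_apply_of, FreeGroup.lift_apply_of]
      show (mk AS * mk BS) ^ p = 1
      rw [← map_mul, ← map_pow, hABp, hwmem]
  set φ : PresentedGroup (triangleRels23 p) →* G := PresentedGroup.toGroup hrel with hφ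
  have hφa : φ a = mk AS := PresentedGroup.toGroup.of hrel
  have hφb : φ b = mk BS := PresentedGroup.toGroup.of hrel
  -- the commutator
  set CS : Matrix.SpecialLinearGroup (Fin 2) ℝ := AS * BS * AS⁻¹ * BS⁻¹ with hCS
  have hφc : φ (a * b * a⁻¹ * b⁻¹) = mk CS := by
    rw [map_mul, map_mul, map_mul, map_inv, map_inv, hφa, hφb, hCS, map_mul, map_mul,
      map_mul, map_inv, map_inv]
  -- trace of the commutator
  have hdetC : (CS : Matrix (Fin 2) (Fin 2) ℝ).det = 1 := CS.prop
  have htrC : (CS : Matrix (Fin 2) (Fin 2) ℝ).trace = z ^ 2 - 1 := by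
    have hval : (CS : Matrix (Fin 2) (Fin 2) ℝ)
        = Amat * Bmat * Amat.adjugate * Bmat.adjugate := by
      rw [hCS]
      simp [Matrix.SpecialLinearGroup.coe_inv]
      rfl
    rw [hval, hA, hB]
    simp [Matrix.adjugate_fin_two, Matrix.trace_fin_two, Matrix.mul_apply, Fin.sum_univ_two]
    linear_combination ((1:ℝ)/2) * ht2
  have htrCgt : 2 < (CS : Matrix (Fin 2) (Fin 2) ℝ).trace := by rw [htrC]; linarith
  -- finite order gives a contradiction
  obtain ⟨n, hn, hpow⟩ := isOfFinOrder_iff_pow_eq_one.mp hfin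
  have h1 : (mk CS) ^ n = 1 := by
    rw [← hφc, ← map_pow, hpow, map_one]
  have h2 : CS ^ n ∈ H := by
    rw [← QuotientGroup.eq_one_iff]
    rw [hmk, QuotientGroup.mk'_apply] at h1
    rw [← h1]
    exact (map_pow (QuotientGroup.mk' H) CS n).symm ▸ rfl
  obtain ⟨k, hk⟩ := Subgroup.mem_zpowers_iff.mp h2
  have hw2 : w ^ 2 = 1 := by
    apply Subtype.ext
    show ((-1 : Matrix (Fin 2) (Fin 2) ℝ)) ^ 2 = 1
    simp
  have htrn : 2 < ((CS : Matrix (Fin 2) (Fin 2) ℝ) ^ n).trace :=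
    aux_trace_pow_gt _ hdetC htrCgt n hn
  have hCn : ((CS ^ n : Matrix.SpecialLinearGroup (Fin 2) ℝ) : Matrix (Fin 2) (Fin 2) ℝ)
      = (CS : Matrix (Fin 2) (Fin 2) ℝ) ^ n := by
    simp
  rcases Int.even_or_odd k with ⟨m, hm⟩ | ⟨m, hm⟩
  · have : w ^ k = 1 := by
      rw [hm, ← two_mul, zpow_mul]
      norm_cast
      rw [hw2, one_zpow]
    rw [this] at hk
    have : ((CS : Matrix (Fin 2) (Fin 2) ℝ)) ^ n = 1 := by
      rw [← hCn, ← hk]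
      rfl
    rw [this, aux_trace_one] at htrn
    linarith
  · have : w ^ k = w := by
      rw [hm, zpow_add, zpow_mul]
      norm_cast
      simp [hw2]
    rw [this] at hk
    have hval : ((CS : Matrix (Fin 2) (Fin 2) ℝ)) ^ n = -1 := by
      rw [← hCn, ← hk]
    rw [hval] at htrn
    have : (-1 : Matrix (Fin 2) (Fin 2) ℝ).trace = -2 := by
      simp [Matrix.trace_fin_two]
    rw [this] at htrn
    linarith
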